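/- Fix a finite set S, d ∈ ℕ, and two commuting projection-valued measurements E = {E_s} and F = {F_s} in PVM over ℂ^d indexed by S. Suppose there exists an orthonormal basis {v₁,…,v_d} of ℂ^d and a partition {τ_s : s ∈ S} of [d] such that for each s ∈ S and each j ∈ τ_s, ‖E_s v_j‖ > α and ‖F_s v_j‖ > α, where α = sqrt((1/2)(1 + sqrt(1 − 1/d²))). Then E_s = F_s for all s ∈ S. -/

import Mathlib

noncomputable section

open scoped InnerProductSpace

/-- An orthogonal projector on the Hilbert space `ℂ^d`. -/
def IsProjector {d : ℕ}
    (E : EuclideanSpace ℂ (Fin d) →L[ℂ] EuclideanSpace ℂ (Fin d)) : Prop :=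
  IsSelfAdjoint E ∧ E ∘L E = E

/-- A projection-valued measurement over `ℂ^d` indexed by a finite set `S`. -/
def IsPVM {d : ℕ} {S : Type} [Fintype S]
    (E : S → (EuclideanSpace ℂ (Fin d) →L[ℂ] EuclideanSpace ℂ (Fin d))) : Prop :=
  (∀ s, IsProjector (E s)) ∧ ∑ s, E s = 1

namespace ClosePVM

variable {d : ℕ}

local notation "H" => EuclideanSpace ℂ (Fin d)

lemma proj_inner {A : H →L[ℂ] H} (hA : IsProjector A) (x : H) :
    ⟪x, A x⟫_ℂ = (‖A x‖ : ℂ) ^ 2 := by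
  have h1 : A (A x) = A x := by
    conv_rhs => rw [← hA.2]
    rfl
  have h2 := ContinuousLinearMap.isSelfAdjoint_iff'.mp hA.1
  calc ⟪x, A x⟫_ℂ = ⟪x, A (A x)⟫_ℂ := by rw [h1]
    _ = ⟪ContinuousLinearMap.adjoint A x, A x⟫_ℂ := by
        rw [ContinuousLinearMap.adjoint_inner_left]
    _ = ⟪A x, A x⟫_ℂ := by rw [h2]
    _ = (‖A x‖ : ℂ) ^ 2 := inner_self_eq_norm_sq_to_K _

lemma proj_re_inner {A : H →L[ℂ] H} (hA : IsProjector A) (x : H) :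
    (⟪x, A x⟫_ℂ).re = ‖A x‖ ^ 2 := by
  rw [proj_inner hA x]; norm_cast

lemma re_inner_self (x : H) : (⟪x, x⟫_ℂ).re = ‖x‖ ^ 2 := by
  rw [inner_self_eq_norm_sq_to_K]; norm_cast

lemma one_sub_proj {A : H →L[ℂ] H} (hA : IsProjector A) : IsProjector (1 - A) := by
  constructor
  · have hone : ContinuousLinearMap.adjoint
        (1 : EuclideanSpace ℂ (Fin d) →L[ℂ] EuclideanSpace ℂ (Fin d)) = 1 :=
      ContinuousLinearMap.adjoint_id
    rw [ContinuousLinearMap.isSelfAdjoint_iff', map_sub,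
      ContinuousLinearMap.isSelfAdjoint_iff'.mp hA.1, hone]
  · have := hA.2
    simp only [ContinuousLinearMap.ext_iff, ContinuousLinearMap.comp_apply] at this ⊢
    intro x
    simp [ContinuousLinearMap.sub_apply, ContinuousLinearMap.one_apply, map_sub, this]

lemma comp_proj {A B : H →L[ℂ] H} (hA : IsProjector A) (hB : IsProjector B)
    (h : A ∘L B = B ∘L A) : IsProjector (A ∘L B) := by
  constructor
  · have : IsSelfAdjoint (A * B) := by
      rw [IsSelfAdjoint, star_mul, hA.1.star_eq, hB.1.star_eq]
      exact h.symm
    exact this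
  · calc (A ∘L B) ∘L (A ∘L B) = A ∘L ((B ∘L A) ∘L B) := by
          simp only [ContinuousLinearMap.comp_assoc]
      _ = A ∘L ((A ∘L B) ∘L B) := by rw [← h]
      _ = (A ∘L A) ∘L (B ∘L B) := by simp only [ContinuousLinearMap.comp_assoc]
      _ = A ∘L B := by rw [hA.2, hB.2]

/-- sum of projectors applied pointwise zero implies each zero -/
lemma sum_proj_zero {S : Type} [Fintype S] {R : S → H →L[ℂ] H}
    (hR : ∀ s, IsProjector (R s)) {x : H} (hsum : ∑ s, R s x = 0) :
    ∀ s, R s x = 0 := by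
  have h0 : ∑ s, ‖R s x‖ ^ 2 = 0 := by
    have : (⟪x, ∑ s, R s x⟫_ℂ).re = 0 := by rw [hsum]; simp
    rw [inner_sum] at this
    rw [← this, Complex.re_sum]
    exact Finset.sum_congr rfl fun s _ => (proj_re_inner (hR s) x).symm
  intro s
  have := (Finset.sum_eq_zero_iff_of_nonneg (fun s _ => sq_nonneg ‖R s x‖)).mp h0 s
    (Finset.mem_univ s)
  simpa using pow_eq_zero_iff (n := 2) (by norm_num) |>.mp this

lemma pvm_orth {S : Type} [Fintype S] {E : S → H →L[ℂ] H} (hE : IsPVM E)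
    {s t : S} (hst : s ≠ t) (x : H) : E s (E t x) = 0 := by
  classical
  set y := E t x with hy
  have hyt : E t y = y := by
    rw [hy]
    conv_rhs => rw [← hE.1 t |>.2]
    rfl
  have hsum : ∑ u, ‖E u y‖ ^ 2 = ‖y‖ ^ 2 := by
    have h1 : (⟪y, (∑ u, E u) y⟫_ℂ).re = ‖y‖ ^ 2 := by
      rw [hE.2, ContinuousLinearMap.one_apply, inner_self_eq_norm_sq_to_K]; norm_cast
    rw [ContinuousLinearMap.sum_apply, inner_sum, Complex.re_sum] at h1
    rw [← h1]
    exact Finset.sum_congr rfl fun u _ => (proj_re_inner (hE.1 u) y).symm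
  classical
  have hft : ‖E t y‖ ^ 2 = ‖y‖ ^ 2 := by rw [hyt]
  have h2 : ∑ u ∈ Finset.univ.erase t, ‖E u y‖ ^ 2 + ‖E t y‖ ^ 2 = ∑ u, ‖E u y‖ ^ 2 :=
    Finset.sum_erase_add _ _ (Finset.mem_univ t)
  have hrest : ∑ u ∈ Finset.univ.erase t, ‖E u y‖ ^ 2 = 0 := by linarith
  have hs : ‖E s y‖ ^ 2 = 0 :=
    (Finset.sum_eq_zero_iff_of_nonneg (fun u _ => sq_nonneg _)).mp hrest s
      (Finset.mem_erase.mpr ⟨hst, Finset.mem_univ s⟩)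
  simpa using pow_eq_zero_iff (n := 2) (by norm_num) |>.mp hs

end ClosePVM

set_option maxHeartbeats 1000000 in
open ClosePVM in
/-- Two commuting PVMs that are both "almost diagonalised" by a common orthonormal basis,
with the threshold `α = sqrt((1/2)(1 + sqrt(1 − 1/d²)))`, must be equal.
The partition `{τ_s : s ∈ S}` of `[d]` is encoded by the map `p : Fin d → S`,
with `τ_s = p⁻¹(s)`. -/
theorem close_PVMs_equal {d : ℕ} {S : Type} [Fintype S]
    (E F : S → (EuclideanSpace ℂ (Fin d) →L[ℂ] EuclideanSpace ℂ (Fin d)))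
    (hE : IsPVM E) (hF : IsPVM F)
    (hcomm : ∀ s t : S, E s ∘L F t = F t ∘L E s)
    (v : Fin d → EuclideanSpace ℂ (Fin d)) (hv : Orthonormal ℂ v)
    (p : Fin d → S)
    (hclose : ∀ j : Fin d,
      Real.sqrt ((1 / 2) * (1 + Real.sqrt (1 - 1 / (d : ℝ) ^ 2))) < ‖E (p j) (v j)‖ ∧
      Real.sqrt ((1 / 2) * (1 + Real.sqrt (1 - 1 / (d : ℝ) ^ 2))) < ‖F (p j) (v j)‖) :
    ∀ s : S, E s = F s := by
  classical
  rcases Nat.eq_zero_or_pos d with hd | hd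
  · subst hd
    intro s
    have hsub : Subsingleton (EuclideanSpace ℂ (Fin 0)) := by
      constructor
      intro a b
      ext i
      exact i.elim0
    refine ContinuousLinearMap.ext fun x => ?_
    exact Subsingleton.elim _ _
  -- main case
  have hd0 : (1:ℝ) ≤ (d:ℝ) := by exact_mod_cast hd
  have hdne : (d:ℝ) ≠ 0 := by positivity
  set β : ℝ := Real.sqrt (1 - 1 / (d : ℝ) ^ 2) with hβdef
  have hβ0 : 0 ≤ β := Real.sqrt_nonneg _
  have hnn : (0:ℝ) ≤ 1 - 1 / (d : ℝ) ^ 2 := by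
    have h1 : (1:ℝ) ≤ (d:ℝ)^2 := by nlinarith
    have : 1 / (d:ℝ)^2 ≤ 1 := by
      rw [div_le_one (by positivity)]; exact h1
    linarith
  have hβsq : β ^ 2 = 1 - 1 / (d : ℝ) ^ 2 := Real.sq_sqrt hnn
  have hα2 : (Real.sqrt ((1 / 2) * (1 + β))) ^ 2 = (1 / 2) * (1 + β) :=
    Real.sq_sqrt (by positivity)
  have hvj : ∀ j, ‖v j‖ = 1 := fun j => hv.1 j
  -- pointwise facts
  have hEi : ∀ s y, E s (E s y) = E s y := by
    intro s y
    conv_rhs => rw [← (hE.1 s).2]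
    rfl
  have hFi : ∀ s y, F s (F s y) = F s y := by
    intro s y
    conv_rhs => rw [← (hF.1 s).2]
    rfl
  have hc : ∀ s t y, E s (F t y) = F t (E s y) := by
    intro s t y
    have := ContinuousLinearMap.ext_iff.mp (hcomm s t) y
    simpa using this
  -- the product projectors
  have hG : ∀ s, IsProjector (E s ∘L F s) := fun s =>
    comp_proj (hE.1 s) (hF.1 s) (hcomm s s)
  set Q : EuclideanSpace ℂ (Fin d) →L[ℂ] EuclideanSpace ℂ (Fin d) :=
    ∑ s, E s ∘L F s with hQdef
  have hQapp : ∀ x, Q x = ∑ s, E s (F s x) := by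
    intro x
    rw [hQdef, ContinuousLinearMap.sum_apply]
    rfl
  have hQsa : IsSelfAdjoint Q := by
    rw [ContinuousLinearMap.isSelfAdjoint_iff', hQdef, map_sum]
    exact Finset.sum_congr rfl fun s _ =>
      ContinuousLinearMap.isSelfAdjoint_iff'.mp (hG s).1
  have hQidem : Q ∘L Q = Q := by
    refine ContinuousLinearMap.ext fun x => ?_
    rw [ContinuousLinearMap.comp_apply, hQapp, hQapp x]
    have hterm : ∀ s, E s (F s (∑ t, E t (F t x))) = E s (F s x) := by
      intro s
      rw [map_sum, map_sum]
      rw [Finset.sum_eq_single s]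
      · rw [← hc s s (F s x), hEi, hFi]
      · intro t _ hts
        rw [← hc t s (F t x)]
        exact pvm_orth hE (Ne.symm hts) (F s (F t x))
      · intro hs; exact absurd (Finset.mem_univ s) hs
    exact Finset.sum_congr rfl fun s _ => hterm s
  have hQproj : IsProjector Q := ⟨hQsa, hQidem⟩
  -- lower bound on the diagonal of the product projector
  have hg : ∀ j, β < ‖E (p j) (F (p j) (v j))‖ ^ 2 := by
    intro j
    set A := E (p j) with hA
    set B := F (p j) with hB
    have hAp : IsProjector A := hE.1 (p j)
    have hBp : IsProjector B := hF.1 (p j)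
    have ha : (1 / 2) * (1 + β) < ‖A (v j)‖ ^ 2 := by
      have h := (hclose j).1
      nlinarith [Real.sqrt_nonneg ((1 / 2) * (1 + β)), hα2, norm_nonneg (A (v j))]
    have hb : (1 / 2) * (1 + β) < ‖B (v j)‖ ^ 2 := by
      have h := (hclose j).2
      nlinarith [Real.sqrt_nonneg ((1 / 2) * (1 + β)), hα2, norm_nonneg (B (v j))]
    have hcomm' : (1 - A) ∘L (1 - B) = (1 - B) ∘L (1 - A) := by
      refine ContinuousLinearMap.ext fun x => ?_
      simp only [ContinuousLinearMap.comp_apply, ContinuousLinearMap.sub_apply,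
        ContinuousLinearMap.one_apply, map_sub]
      rw [hc (p j) (p j) x]
      abel
    have hR : IsProjector ((1 - A) ∘L (1 - B)) :=
      comp_proj (one_sub_proj hAp) (one_sub_proj hBp) hcomm'
    have h0 : (0:ℝ) ≤ (⟪v j, ((1 - A) ∘L (1 - B)) (v j)⟫_ℂ).re := by
      rw [proj_re_inner hR]; positivity
    have hAB : (⟪v j, A (B (v j))⟫_ℂ).re = ‖A (B (v j))‖ ^ 2 := by
      have := proj_re_inner (hG (p j)) (v j)
      simpa using this
    have hexp : ((1 - A) ∘L (1 - B)) (v j)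
        = (v j - B (v j)) - (A (v j) - A (B (v j))) := by
      simp only [ContinuousLinearMap.comp_apply, ContinuousLinearMap.sub_apply,
        ContinuousLinearMap.one_apply, map_sub]
      abel
    have hx : (⟪v j, ((1 - A) ∘L (1 - B)) (v j)⟫_ℂ).re
        = ‖v j‖ ^ 2 - ‖B (v j)‖ ^ 2 - ‖A (v j)‖ ^ 2 + ‖A (B (v j))‖ ^ 2 := by
      rw [hexp, inner_sub_right, inner_sub_right, inner_sub_right]
      simp only [Complex.sub_re]
      rw [re_inner_self, proj_re_inner hBp, proj_re_inner hAp, hAB]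
      ring
    have h1 : ‖v j‖ ^ 2 = 1 := by rw [hvj j]; norm_num
    rw [hx] at h0
    linarith
  -- Q = 1
  have hQ1 : Q = 1 := by
    by_contra hne
    set P : EuclideanSpace ℂ (Fin d) →L[ℂ] EuclideanSpace ℂ (Fin d) := 1 - Q with hPdef
    have hP : IsProjector P := one_sub_proj hQproj
    have hPne : P ≠ 0 := by
      intro h
      exact hne (sub_eq_zero.mp h).symm
    obtain ⟨y, hy⟩ : ∃ y, P y ≠ 0 := by
      by_contra hall
      push_neg at hall
      exact hPne (ContinuousLinearMap.ext fun y => by simp [hall y])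
    set u : EuclideanSpace ℂ (Fin d) := ((‖P y‖ : ℂ))⁻¹ • P y with hudef
    have hPy0 : ‖P y‖ ≠ 0 := norm_ne_zero_iff.mpr hy
    have hu : ‖u‖ = 1 := by
      rw [hudef, norm_smul, norm_inv]
      simp only [Complex.norm_real, Real.norm_eq_abs, abs_norm]
      field_simp
    have hPP : P (P y) = P y := by
      conv_rhs => rw [← hP.2]
      rfl
    have hPu : P u = u := by
      rw [hudef, map_smul, hPP]
    have hcard : Fintype.card (Fin d) = Module.finrank ℂ (EuclideanSpace ℂ (Fin d)) := by
      simp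
    have : Nonempty (Fin d) := ⟨⟨0, hd⟩⟩
    set bb := (basisOfOrthonormalOfCardEqFinrank hv hcard).toOrthonormalBasis
      (by rwa [coe_basisOfOrthonormalOfCardEqFinrank]) with hbbdef
    have hbb : ∀ j, bb j = v j := by
      intro j
      rw [hbbdef, Module.Basis.coe_toOrthonormalBasis, coe_basisOfOrthonormalOfCardEqFinrank]
    have hpar : ∑ j, ‖⟪v j, u⟫_ℂ‖ ^ 2 = 1 := by
      have h1 := bb.sum_inner_mul_inner u u
      have h2 : ∀ j, ⟪u, bb j⟫_ℂ * ⟪bb j, u⟫_ℂ = (‖⟪v j, u⟫_ℂ‖ ^ 2 : ℝ) := by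
        intro j
        rw [hbb, ← inner_conj_symm u (v j), RCLike.conj_mul]; norm_cast
      rw [Finset.sum_congr rfl (fun j _ => h2 j)] at h1
      have h3 : (⟪u, u⟫_ℂ).re = 1 := by
        rw [re_inner_self, hu]; norm_num
      rw [← h3, ← h1, Complex.re_sum]
      exact Finset.sum_congr rfl fun j _ => by norm_cast
    have hineq1 : ∀ j, ‖⟪v j, u⟫_ℂ‖ ≤ ‖P (v j)‖ := by
      intro j
      have h1 : ⟪v j, u⟫_ℂ = ⟪P (v j), u⟫_ℂ := by
        conv_lhs => rw [← hPu, ← ContinuousLinearMap.isSelfAdjoint_iff'.mp hP.1]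
        rw [ContinuousLinearMap.adjoint_inner_right]
      rw [h1]
      calc ‖⟪P (v j), u⟫_ℂ‖ ≤ ‖P (v j)‖ * ‖u‖ := norm_inner_le_norm _ _
        _ = ‖P (v j)‖ := by rw [hu, mul_one]
    have hPb : ∀ j, ‖P (v j)‖ ^ 2 < 1 - β := by
      intro j
      have h1 : (⟪v j, P (v j)⟫_ℂ).re = ‖P (v j)‖ ^ 2 := proj_re_inner hP _
      have h2 : (⟪v j, P (v j)⟫_ℂ).re = 1 - (⟪v j, Q (v j)⟫_ℂ).re := by
        rw [hPdef]
        simp only [ContinuousLinearMap.sub_apply, ContinuousLinearMap.one_apply,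
          inner_sub_right, Complex.sub_re]
        rw [re_inner_self]
        rw [hvj j]
        norm_num
      have h3 : (⟪v j, Q (v j)⟫_ℂ).re = ∑ s, ‖E s (F s (v j))‖ ^ 2 := by
        rw [hQdef, ContinuousLinearMap.sum_apply, inner_sum, Complex.re_sum]
        refine Finset.sum_congr rfl fun s _ => ?_
        have := proj_re_inner (hG s) (v j)
        simpa using this
      have h4 := hg j
      have h5 : ‖E (p j) (F (p j) (v j))‖ ^ 2 ≤ ∑ s, ‖E s (F s (v j))‖ ^ 2 :=
        Finset.single_le_sum (f := fun s => ‖E s (F s (v j))‖ ^ 2)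
          (fun s _ => sq_nonneg _) (Finset.mem_univ (p j))
      linarith
    have hd2 : (d:ℝ) ^ 2 * β ^ 2 = (d:ℝ) ^ 2 - 1 := by
      rw [hβsq]
      field_simp
    have hnum : (d:ℝ) * (1 - β) ≤ 1 := by
      nlinarith [hd2, hβ0, hd0, mul_nonneg (mul_nonneg (le_trans zero_le_one hd0) hβ0)
        (sub_nonneg.mpr hd0), sq_nonneg ((d:ℝ) * β - ((d:ℝ) - 1)),
        sq_nonneg ((d:ℝ) * β + ((d:ℝ) - 1))]
    have hcontr : (1:ℝ) < 1 := by
      calc (1:ℝ) = ∑ j, ‖⟪v j, u⟫_ℂ‖ ^ 2 := hpar.symm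
        _ ≤ ∑ j, ‖P (v j)‖ ^ 2 :=
            Finset.sum_le_sum fun j _ => pow_le_pow_left₀ (norm_nonneg _) (hineq1 j) 2
        _ < ∑ _j : Fin d, (1 - β) :=
            Finset.sum_lt_sum_of_nonempty Finset.univ_nonempty (fun j _ => hPb j)
        _ = (d:ℝ) * (1 - β) := by
            rw [Finset.sum_const, Finset.card_univ, Fintype.card_fin, nsmul_eq_mul]
        _ ≤ 1 := hnum
    exact absurd hcontr (lt_irrefl 1)
  -- conclude
  have hEF : ∀ s x, E s (F s x) = E s x := by
    intro s x
    have hR : ∀ t, IsProjector (E t ∘L (1 - F t)) := by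
      intro t
      refine comp_proj (hE.1 t) (one_sub_proj (hF.1 t)) ?_
      refine ContinuousLinearMap.ext fun z => ?_
      simp only [ContinuousLinearMap.comp_apply, ContinuousLinearMap.sub_apply,
        ContinuousLinearMap.one_apply, map_sub]
      rw [hc t t z]
    have hsum : ∑ t, (E t ∘L (1 - F t)) x = 0 := by
      simp only [ContinuousLinearMap.comp_apply, ContinuousLinearMap.sub_apply,
        ContinuousLinearMap.one_apply, map_sub]
      rw [Finset.sum_sub_distrib]
      have e1 : ∑ t, E t x = x := by
        rw [← ContinuousLinearMap.sum_apply, hE.2]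
        rfl
      have e2 : ∑ t, E t (F t x) = x := by
        rw [← hQapp, hQ1]
        rfl
      rw [e1, e2, sub_self]
    have := sum_proj_zero hR hsum s
    simp only [ContinuousLinearMap.comp_apply, ContinuousLinearMap.sub_apply,
      ContinuousLinearMap.one_apply, map_sub] at this
    exact (sub_eq_zero.mp this).symm
  have hFE : ∀ s x, F s (E s x) = F s x := by
    intro s x
    have hR : ∀ t, IsProjector (F t ∘L (1 - E t)) := by
      intro t
      refine comp_proj (hF.1 t) (one_sub_proj (hE.1 t)) ?_
      refine ContinuousLinearMap.ext fun z => ?_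
      simp only [ContinuousLinearMap.comp_apply, ContinuousLinearMap.sub_apply,
        ContinuousLinearMap.one_apply, map_sub]
      rw [hc t t z]
    have hsum : ∑ t, (F t ∘L (1 - E t)) x = 0 := by
      simp only [ContinuousLinearMap.comp_apply, ContinuousLinearMap.sub_apply,
        ContinuousLinearMap.one_apply, map_sub]
      rw [Finset.sum_sub_distrib]
      have e1 : ∑ t, F t x = x := by
        rw [← ContinuousLinearMap.sum_apply, hF.2]
        rfl
      have e2 : ∑ t, F t (E t x) = x := by
        have : ∀ t, F t (E t x) = E t (F t x) := fun t => (hc t t x).symm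
        rw [Finset.sum_congr rfl fun t _ => this t, ← hQapp, hQ1]
        rfl
      rw [e1, e2, sub_self]
    have := sum_proj_zero hR hsum s
    simp only [ContinuousLinearMap.comp_apply, ContinuousLinearMap.sub_apply,
      ContinuousLinearMap.one_apply, map_sub] at this
    exact (sub_eq_zero.mp this).symm
  intro s
  refine ContinuousLinearMap.ext fun x => ?_
  calc E s x = E s (F s x) := (hEF s x).symm
    _ = F s (E s x) := hc s s x
    _ = F s x := hFE s x
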